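/- Let a, b, c be real numbers with a >= b > 0 and 0 < c < b/2, let 0 <= h < c, and define F : R^2 -> R by F(x1, x2) = min{a/2 - |x1|, b/2 - |x2|, x2 - x1 + (a+b)/2 - c}. Then the superlevel set {x in R^2 : F(x) >= h} equals the convex hull of the five points P1 = (-(a/2 - h), -(b/2 - h)), P2 = (a/2 - c, -(b/2 - h)), P3 = (a/2 - h, -(b/2 - c)), P4 = (a/2 - h, b/2 - h), P5 = (-(a/2 - h), b/2 - h). -/
import Mathlib

set_option linter.unnecessarySeqFocus false

private lemma seg_mem_hull {s : Set (ℝ × ℝ)} {p q x : ℝ × ℝ}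
    (hp : p ∈ convexHull ℝ s) (hq : q ∈ convexHull ℝ s) {t : ℝ}
    (h0 : 0 ≤ t) (h1 : t ≤ 1) (hx : x = (1 - t) • p + t • q) :
    x ∈ convexHull ℝ s := by
  rw [hx]
  exact (convex_convexHull ℝ s) hp hq (by linarith) h0 (by ring)

private lemma abs_helper {v m h : ℝ} (h1 : -(m - h) ≤ v) (h2 : v ≤ m - h) :
    h ≤ m - |v| := by
  rcases abs_cases v with ⟨he, _⟩ | ⟨he, _⟩ <;> linarith

private lemma comb_eq {d : ℝ} (hd : d ≠ 0) (p q n v : ℝ)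
    (hv : d * v = (d - n) * p + n * q) : v = (1 - n / d) * p + n / d * q := by
  have h2 : d * v = d * ((1 - n / d) * p + n / d * q) := by
    rw [hv]; field_simp
  exact mul_left_cancel₀ hd h2

set_option maxHeartbeats 1000000 in
/-- For `0 ≤ h < c`, the superlevel set `{F ≥ h}` of the integral affine distance to the
boundary of the Delzant polygon is the pentagon with the five indicated vertices. -/
theorem stmt_6 (a b c h : ℝ) (hab : b ≤ a) (hb : 0 < b) (hc0 : 0 < c) (hc : c < b / 2)
    (hh0 : 0 ≤ h) (hhc : h < c)
    (F : ℝ × ℝ → ℝ)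
    (hF : ∀ x : ℝ × ℝ,
      F x = min (min (a / 2 - |x.1|) (b / 2 - |x.2|)) (x.2 - x.1 + (a + b) / 2 - c)) :
    {x : ℝ × ℝ | h ≤ F x} =
      convexHull ℝ
        {(-(a / 2 - h), -(b / 2 - h)), (a / 2 - c, -(b / 2 - h)),
         (a / 2 - h, -(b / 2 - c)), (a / 2 - h, b / 2 - h),
         (-(a / 2 - h), b / 2 - h)} := by
  have hA0 : 0 < a / 2 - h := by linarith
  have hB0 : 0 < b / 2 - h := by linarith
  have hch : 0 < c - h := by linarith
  have heA : 0 < (a / 2 - c) + (a / 2 - h) := by linarith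
  have hbch : 0 < b - c - h := by linarith
  set V : Set (ℝ × ℝ) :=
    {(-(a / 2 - h), -(b / 2 - h)), (a / 2 - c, -(b / 2 - h)),
     (a / 2 - h, -(b / 2 - c)), (a / 2 - h, b / 2 - h),
     (-(a / 2 - h), b / 2 - h)} with hV
  have m1 : ((-(a / 2 - h), -(b / 2 - h)) : ℝ × ℝ) ∈ convexHull ℝ V :=
    subset_convexHull ℝ V (by simp [hV])
  have m2 : ((a / 2 - c, -(b / 2 - h)) : ℝ × ℝ) ∈ convexHull ℝ V :=
    subset_convexHull ℝ V (by simp [hV])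
  have m3 : ((a / 2 - h, -(b / 2 - c)) : ℝ × ℝ) ∈ convexHull ℝ V :=
    subset_convexHull ℝ V (by simp [hV])
  have m4 : ((a / 2 - h, b / 2 - h) : ℝ × ℝ) ∈ convexHull ℝ V :=
    subset_convexHull ℝ V (by simp [hV])
  have m5 : ((-(a / 2 - h), b / 2 - h) : ℝ × ℝ) ∈ convexHull ℝ V :=
    subset_convexHull ℝ V (by simp [hV])
  -- extra points of the pentagon boundary
  have m6 : ((a / 2 - c, b / 2 - h) : ℝ × ℝ) ∈ convexHull ℝ V := by
    refine seg_mem_hull m5 m4 (t := ((a / 2 - c) + (a / 2 - h)) / (2 * (a / 2 - h)))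
      (div_nonneg (by linarith) (by linarith)) ?_ ?_
    · rw [div_le_one (by linarith)]; linarith
    · simp only [Prod.smul_mk, Prod.mk_add_mk, smul_eq_mul, Prod.mk.injEq]
      constructor
      · exact comb_eq (ne_of_gt (by linarith)) _ _ _ _ (by ring)
      · ring
  have m7 : ((a / 2 - c, -(b / 2 - c)) : ℝ × ℝ) ∈ convexHull ℝ V := by
    refine seg_mem_hull m2 m6 (t := ((-(b / 2 - c)) + (b / 2 - h)) / (2 * (b / 2 - h)))
      (div_nonneg (by linarith) (by linarith)) ?_ ?_
    · rw [div_le_one (by linarith)]; linarith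
    · simp only [Prod.smul_mk, Prod.mk_add_mk, smul_eq_mul, Prod.mk.injEq]
      constructor
      · ring
      · exact comb_eq (ne_of_gt (by linarith)) _ _ _ _ (by ring)
  ext x
  simp only [Set.mem_setOf_eq]
  constructor
  · intro hx
    rw [hF, le_min_iff, le_min_iff] at hx
    obtain ⟨⟨h1, h2⟩, h3⟩ := hx
    have hx1 : |x.1| ≤ a / 2 - h := by linarith
    have hx2 : |x.2| ≤ b / 2 - h := by linarith
    obtain ⟨hx1l, hx1r⟩ := abs_le.1 hx1
    obtain ⟨hx2l, hx2r⟩ := abs_le.1 hx2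
    have hcut : x.1 - x.2 ≤ (a + b) / 2 - c - h := by linarith
    rcases le_total x.1 (a / 2 - c) with hL | hR
    · -- left rectangle [-(a/2-h), a/2-c] × [-(b/2-h), b/2-h]
      have qb : ((x.1, -(b / 2 - h)) : ℝ × ℝ) ∈ convexHull ℝ V := by
        refine seg_mem_hull m1 m2 (t := (x.1 + (a / 2 - h)) / ((a / 2 - c) + (a / 2 - h)))
          (div_nonneg (by linarith) (by linarith)) ?_ ?_
        · rw [div_le_one heA]; linarith
        · simp only [Prod.smul_mk, Prod.mk_add_mk, smul_eq_mul, Prod.mk.injEq]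
          constructor
          · exact comb_eq (ne_of_gt (by linarith)) _ _ _ _ (by ring)
          · ring
      have qt : ((x.1, b / 2 - h) : ℝ × ℝ) ∈ convexHull ℝ V := by
        refine seg_mem_hull m5 m6 (t := (x.1 + (a / 2 - h)) / ((a / 2 - c) + (a / 2 - h)))
          (div_nonneg (by linarith) (by linarith)) ?_ ?_
        · rw [div_le_one heA]; linarith
        · simp only [Prod.smul_mk, Prod.mk_add_mk, smul_eq_mul, Prod.mk.injEq]
          constructor
          · exact comb_eq (ne_of_gt (by linarith)) _ _ _ _ (by ring)
          · ring
      refine seg_mem_hull qb qt (t := (x.2 + (b / 2 - h)) / (2 * (b / 2 - h)))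
        (div_nonneg (by linarith) (by linarith)) ?_ ?_
      · rw [div_le_one (by linarith)]; linarith
      · refine Prod.ext ?_ ?_ <;>
          simp only [Prod.smul_mk, Prod.mk_add_mk, smul_eq_mul]
        · ring
        · exact comb_eq (ne_of_gt (by linarith)) _ _ _ _ (by ring)
    · rcases le_total (-(b / 2 - c)) x.2 with hT | hB
      · -- right upper rectangle [a/2-c, a/2-h] × [-(b/2-c), b/2-h]
        have qb : ((x.1, -(b / 2 - c)) : ℝ × ℝ) ∈ convexHull ℝ V := by
          refine seg_mem_hull m7 m3 (t := (x.1 - (a / 2 - c)) / (c - h))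
            (div_nonneg (by linarith) (by linarith)) ?_ ?_
          · rw [div_le_one hch]; linarith
          · simp only [Prod.smul_mk, Prod.mk_add_mk, smul_eq_mul, Prod.mk.injEq]
            constructor
            · exact comb_eq (ne_of_gt (by linarith)) _ _ _ _ (by ring)
            · ring
        have qt : ((x.1, b / 2 - h) : ℝ × ℝ) ∈ convexHull ℝ V := by
          refine seg_mem_hull m6 m4 (t := (x.1 - (a / 2 - c)) / (c - h))
            (div_nonneg (by linarith) (by linarith)) ?_ ?_
          · rw [div_le_one hch]; linarith
          · simp only [Prod.smul_mk, Prod.mk_add_mk, smul_eq_mul, Prod.mk.injEq]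
            constructor
            · exact comb_eq (ne_of_gt (by linarith)) _ _ _ _ (by ring)
            · ring
        refine seg_mem_hull qb qt (t := (x.2 + (b / 2 - c)) / (b - c - h))
          (div_nonneg (by linarith) (by linarith)) ?_ ?_
        · rw [div_le_one hbch]; linarith
        · refine Prod.ext ?_ ?_ <;>
            simp only [Prod.smul_mk, Prod.mk_add_mk, smul_eq_mul]
          · ring
          · exact comb_eq (ne_of_gt (by linarith)) _ _ _ _ (by ring)
      · -- lower-right triangle
        rcases eq_or_lt_of_le hx2l with hdeg | hpos
        · -- degenerate: x is the vertex P2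
          have hx1eq : x.1 = a / 2 - c := by
            have : x.1 ≤ x.2 + ((a + b) / 2 - c - h) := by linarith
            have : x.1 ≤ a / 2 - c := by rw [← hdeg] at this; linarith
            linarith
          have hxeq : x = ((a / 2 - c, -(b / 2 - h)) : ℝ × ℝ) := by
            exact Prod.ext hx1eq hdeg.symm
          rw [hxeq]; exact m2
        · have hd : 0 < x.2 + (b / 2 - h) := by linarith
          have ql : ((a / 2 - c, x.2) : ℝ × ℝ) ∈ convexHull ℝ V := by
            refine seg_mem_hull m2 m7 (t := (x.2 + (b / 2 - h)) / (c - h))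
              (div_nonneg (by linarith) (by linarith)) ?_ ?_
            · rw [div_le_one hch]; linarith
            · simp only [Prod.smul_mk, Prod.mk_add_mk, smul_eq_mul, Prod.mk.injEq]
              constructor
              · ring
              · exact comb_eq (ne_of_gt (by linarith)) _ _ _ _ (by ring)
          have qr : ((x.2 + ((a + b) / 2 - c - h), x.2) : ℝ × ℝ) ∈ convexHull ℝ V := by
            refine seg_mem_hull m2 m3 (t := (x.2 + (b / 2 - h)) / (c - h))
              (div_nonneg (by linarith) (by linarith)) ?_ ?_
            · rw [div_le_one hch]; linarith
            · simp only [Prod.smul_mk, Prod.mk_add_mk, smul_eq_mul, Prod.mk.injEq]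
              constructor
              · exact comb_eq (ne_of_gt (by linarith)) _ _ _ _ (by ring)
              · exact comb_eq (ne_of_gt (by linarith)) _ _ _ _ (by ring)
          refine seg_mem_hull ql qr (t := (x.1 - (a / 2 - c)) / (x.2 + (b / 2 - h)))
            (div_nonneg (by linarith) (by linarith)) ?_ ?_
          · rw [div_le_one hd]; linarith
          · refine Prod.ext ?_ ?_ <;>
              simp only [Prod.smul_mk, Prod.mk_add_mk, smul_eq_mul]
            · exact comb_eq (ne_of_gt (by linarith)) _ _ _ _ (by ring)
            · ring
  · intro hx
    refine convexHull_min (t := {y : ℝ × ℝ | h ≤ F y}) ?_ ?_ hx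
    · intro p hp
      simp only [hV, Set.mem_insert_iff, Set.mem_singleton_iff] at hp
      rcases hp with rfl | rfl | rfl | rfl | rfl <;>
        · simp only [Set.mem_setOf_eq, hF, le_min_iff]
          refine ⟨⟨abs_helper (by norm_num <;> linarith) (by norm_num <;> linarith),
            abs_helper (by norm_num <;> linarith) (by norm_num <;> linarith)⟩, by norm_num <;> linarith⟩
    · intro x hx y hy s t hs ht hst
      simp only [Set.mem_setOf_eq, hF, le_min_iff] at hx hy ⊢
      obtain ⟨⟨hx1, hx2⟩, hx3⟩ := hx
      obtain ⟨⟨hy1, hy2⟩, hy3⟩ := hy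
      have e1 : (s • x + t • y).1 = s * x.1 + t * y.1 := rfl
      have e2 : (s • x + t • y).2 = s * x.2 + t * y.2 := rfl
      rw [e1, e2]
      have ha1 : |s * x.1 + t * y.1| ≤ s * |x.1| + t * |y.1| := by
        calc |s * x.1 + t * y.1| ≤ |s * x.1| + |t * y.1| := abs_add_le _ _
          _ = s * |x.1| + t * |y.1| := by
              rw [abs_mul, abs_mul, abs_of_nonneg hs, abs_of_nonneg ht]
      have ha2 : |s * x.2 + t * y.2| ≤ s * |x.2| + t * |y.2| := by
        calc |s * x.2 + t * y.2| ≤ |s * x.2| + |t * y.2| := abs_add_le _ _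
          _ = s * |x.2| + t * |y.2| := by
              rw [abs_mul, abs_mul, abs_of_nonneg hs, abs_of_nonneg ht]
      refine ⟨⟨?_, ?_⟩, ?_⟩
      · nlinarith [mul_le_mul_of_nonneg_left (show |x.1| ≤ a / 2 - h by linarith) hs,
          mul_le_mul_of_nonneg_left (show |y.1| ≤ a / 2 - h by linarith) ht]
      · nlinarith [mul_le_mul_of_nonneg_left (show |x.2| ≤ b / 2 - h by linarith) hs,
          mul_le_mul_of_nonneg_left (show |y.2| ≤ b / 2 - h by linarith) ht]
      · nlinarith [mul_le_mul_of_nonneg_left hx3 hs, mul_le_mul_of_nonneg_left hy3 ht]
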